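/- arXiv:2304.14197 — 5 statements merged into one kernel-verified Lean document; each statement's English description precedes it below -/
import Mathlib

section
/- Let n ≥ 1, β > 0, let A ∈ ℝ^{n×n} with A_{i,j} ∈ [0,1] for all i,j, and let z ∈ ℝⁿ with z_j ≥ 0 and Σ_j z_j ≤ β. Let C and D be qubit registers (ℂ²) and A, B be n-dimensional registers (ℂⁿ). Suppose U_z is a unitary on C⊗B with U_z (|0⟩_C |0⟩_B) = |0⟩_C Σ_{j=1}^n √(z_j/β) |j⟩_B + |1⟩_C |φ⟩_B for some vector |φ⟩_B, and suppose O'_A is a unitary on D⊗A⊗B with O'_A (|0⟩_D |i⟩_A |j⟩_B) = (√(A_{i,j}) |0⟩_D + √(1 − A_{i,j}) |1⟩_D) |i⟩_A |j⟩_B for all i, j ∈ [n]. Define V = (|0⟩⟨0|_C ⊗ O'_A + |1⟩⟨1|_C ⊗ I_{DAB}) (U_z ⊗ I_{DA}), acting on C⊗D⊗A⊗B. Then for every i ∈ [n], (⟨0|_C ⟨0|_D ⊗ I_{AB}) V (|0⟩_C |0⟩_D |i⟩_A |0⟩_B) = Σ_{j=1}^n √(A_{i,j} z_j / β) |i⟩_A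 |j⟩_B. In particular, writing u = A z, the squared norm of this vector is u_i/β, so V is a β-amplitude-encoding of the vector u. -/
open Finset Matrix

/-- The unitary `V = (|0⟩⟨0|_C ⊗ O'_A + |1⟩⟨1|_C ⊗ I_{DAB})(U_z ⊗ I_{DA})` built from a
state-preparation unitary `U_z` for `z/β` and the entry oracle `O'_A` of `A` maps
`|0⟩_C|0⟩_D|i⟩_A|0⟩_B` to `∑_j √(A_{ij} z_j/β)|i⟩_A|j⟩_B` on the `⟨0|_C⟨0|_D` block;
in particular the squared norm of this block is `(Az)_i/β`, so `V` is a
`β`-amplitude-encoding of `u = Az`.  Registers are ordered as `C ⊗ D ⊗ A ⊗ B`, with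
indices `(c, d, a, b)`. -/
theorem stmt10 (n : ℕ) [NeZero n] (β : ℝ) (hβ : 0 < β)
    (A : Matrix (Fin n) (Fin n) ℝ) (hA : ∀ i j, A i j ∈ Set.Icc (0 : ℝ) 1)
    (z : Fin n → ℝ) (hz : ∀ j, 0 ≤ z j) (hz1 : ∑ j, z j ≤ β)
    (Uz : Matrix (Fin 2 × Fin n) (Fin 2 × Fin n) ℂ)
    (hUzU : Uz ∈ Matrix.unitaryGroup (Fin 2 × Fin n) ℂ)
    (φ : Fin n → ℂ)
    (hUz : ∀ c b, Uz.mulVec (fun q => if q = ((0 : Fin 2), (0 : Fin n)) then 1 else 0) (c, b) =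
      if c = 0 then (Real.sqrt (z b / β) : ℂ) else φ b)
    (OA : Matrix (Fin 2 × Fin n × Fin n) (Fin 2 × Fin n × Fin n) ℂ)
    (hOAU : OA ∈ Matrix.unitaryGroup (Fin 2 × Fin n × Fin n) ℂ)
    (hOA : ∀ i j d a b,
      OA.mulVec (fun q => if q = ((0 : Fin 2), i, j) then 1 else 0) (d, a, b) =
        if a = i ∧ b = j then
          (if d = 0 then (Real.sqrt (A i j) : ℂ) else (Real.sqrt (1 - A i j) : ℂ))
        else 0)
    (V : Matrix (Fin 2 × Fin 2 × Fin n × Fin n) (Fin 2 × Fin 2 × Fin n × Fin n) ℂ)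
    (hV : V = (Matrix.of fun p q =>
        (if p.1 = 0 ∧ q.1 = 0 then OA p.2 q.2 else 0) +
        (if p.1 = 1 ∧ q.1 = 1 ∧ p.2 = q.2 then 1 else 0)) *
      (Matrix.of fun p q =>
        Uz (p.1, p.2.2.2) (q.1, q.2.2.2) *
          (if p.2.1 = q.2.1 ∧ p.2.2.1 = q.2.2.1 then 1 else 0))) :
    ∀ i : Fin n,
      (∀ a b : Fin n,
        V.mulVec (fun q => if q = ((0 : Fin 2), (0 : Fin 2), i, (0 : Fin n)) then 1 else 0)
            (0, 0, a, b) =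
          if a = i then (Real.sqrt (A i b * z b / β) : ℂ) else 0) ∧
      (∑ a : Fin n, ∑ b : Fin n,
        ‖V.mulVec (fun q => if q = ((0 : Fin 2), (0 : Fin 2), i, (0 : Fin n)) then 1 else 0)
            (0, 0, a, b)‖ ^ 2) = A.mulVec z i / β := by
  have hUz' : ∀ c b, Uz (c, b) (0, 0) =
      if c = 0 then (Real.sqrt (z b / β) : ℂ) else φ b := by
    intro c b
    have := hUz c b
    simpa [Matrix.mulVec, dotProduct, mul_ite, mul_one, mul_zero] using this
  have hOA' : ∀ i j d a b, OA (d, a, b) ((0 : Fin 2), i, j) =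
      if a = i ∧ b = j then
        (if d = 0 then (Real.sqrt (A i j) : ℂ) else (Real.sqrt (1 - A i j) : ℂ))
      else 0 := by
    intro i j d a b
    have := hOA i j d a b
    simpa [Matrix.mulVec, dotProduct, mul_ite, mul_one, mul_zero] using this
  intro i
  have key : ∀ a b : Fin n,
      V.mulVec (fun q => if q = ((0 : Fin 2), (0 : Fin 2), i, (0 : Fin n)) then 1 else 0)
          (0, 0, a, b) =
        if a = i then (Real.sqrt (A i b * z b / β) : ℂ) else 0 := by
    intro a b
    have hVe : V.mulVec (fun q => if q = ((0 : Fin 2), (0 : Fin 2), i, (0 : Fin n)) then 1 else 0)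
        (0, 0, a, b) = V (0, 0, a, b) (0, 0, i, 0) := by
      simp [Matrix.mulVec, dotProduct, mul_ite, mul_one, mul_zero]
    rw [hVe, hV, Matrix.mul_apply]
    simp only [Matrix.of_apply, Fintype.sum_prod_type, hUz', hOA']
    simp [Fin.sum_univ_two, ite_and, mul_ite, ite_mul, mul_one, mul_zero, zero_mul,
      Finset.sum_ite_eq, Finset.sum_ite_eq']
    simp only [hOA']
    rcases eq_or_ne a i with rfl | h
    · simp [ite_and, Finset.sum_ite_eq', mul_div_assoc, Real.sqrt_mul (hA a b).1,
        Complex.ofReal_mul]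
    · simp [h, ite_and]
  refine ⟨key, ?_⟩
  have hnn : ∀ b : Fin n, (0 : ℝ) ≤ A i b * z b / β := fun b =>
    div_nonneg (mul_nonneg (hA i b).1 (hz b)) hβ.le
  simp only [key]
  rw [Finset.sum_comm]
  have hstep : ∀ b : Fin n,
      (∑ a : Fin n, ‖if a = i then (Real.sqrt (A i b * z b / β) : ℂ) else 0‖ ^ 2) =
        A i b * z b / β := by
    intro b
    rw [Finset.sum_eq_single i]
    · simp [Complex.norm_real, abs_of_nonneg (Real.sqrt_nonneg _), Real.sq_sqrt (hnn b)]
    · intro a _ ha; simp [ha]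
    · intro h; exact absurd (Finset.mem_univ i) h
  simp only [hstep]
  rw [Matrix.mulVec, dotProduct, ← Finset.sum_div]
end

section
/- Let u ∈ ℝⁿ with u_i ≥ 0 and β > 0, and let V be a unitary on registers C⊗A⊗B (C = ℂ², A = ℂⁿ, B = ℂ^d) such that ⟨0|_C V (|0⟩_C |i⟩_A |0⟩_B) = √(u_i/β) |i⟩_A |ψ_i⟩_B for some unit vectors |ψ_i⟩_B, for all i ∈ [n]. Introduce a second qubit register D and define U_u = (V†_{CAB} ⊗ I_D)(V_{DAB} ⊗ I_C) on C⊗D⊗A⊗B, where V_{DAB} denotes V acting on registers D, A, B and V†_{CAB} denotes V† acting on registers C, A, B. Then for all i, j ∈ [n], ⟨0|_C ⟨0|_D ⟨j|_A ⟨0|_B U_u (|0⟩_C |0⟩_D |i⟩_A |0⟩_B) = δ_{ij} · u_i/β. That is, U_u is a (1,0)-block-encoding of diag(u)/β. -/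
open Finset Matrix

/-- If `V` on `C ⊗ A ⊗ B` is a `β`-amplitude-encoding of a nonnegative vector `u`
(i.e. `⟨0|_C V|0⟩_C|i⟩_A|0⟩_B = √(u_i/β)|i⟩_A|ψ_i⟩_B` for unit vectors `ψ_i`), then
`U_u = (V†_{CAB} ⊗ I_D)(V_{DAB} ⊗ I_C)` on `C ⊗ D ⊗ A ⊗ B` satisfies
`⟨0|_C⟨0|_D⟨j|_A⟨0|_B U_u |0⟩_C|0⟩_D|i⟩_A|0⟩_B = δ_{ij} u_i/β`, i.e. it is a
`(1,0)`-block-encoding of `diag(u)/β`.  Indices are ordered `(c, d, a, b)`. -/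
theorem stmt11 (n d : ℕ) [NeZero n] [NeZero d] (β : ℝ) (hβ : 0 < β)
    (u : Fin n → ℝ) (hu : ∀ i, 0 ≤ u i)
    (V : Matrix (Fin 2 × Fin n × Fin d) (Fin 2 × Fin n × Fin d) ℂ)
    (hVU : V ∈ Matrix.unitaryGroup (Fin 2 × Fin n × Fin d) ℂ)
    (ψ : Fin n → Fin d → ℂ) (hψ : ∀ i, ∑ b, ‖ψ i b‖ ^ 2 = 1)
    (hV : ∀ i a b,
      V.mulVec (fun q => if q = ((0 : Fin 2), i, (0 : Fin d)) then 1 else 0) (0, a, b) =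
        if a = i then (Real.sqrt (u i / β) : ℂ) * ψ i b else 0)
    (Uu : Matrix (Fin 2 × Fin 2 × Fin n × Fin d) (Fin 2 × Fin 2 × Fin n × Fin d) ℂ)
    (hUu : Uu = (Matrix.of fun p q =>
        (if p.2.1 = q.2.1 then 1 else 0) * Vᴴ (p.1, p.2.2) (q.1, q.2.2)) *
      (Matrix.of fun p q =>
        (if p.1 = q.1 then 1 else 0) * V (p.2.1, p.2.2) (q.2.1, q.2.2))) :
    ∀ i j : Fin n,
      Uu.mulVec (fun q => if q = ((0 : Fin 2), (0 : Fin 2), i, (0 : Fin d)) then 1 else 0)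
          (0, 0, j, 0) =
        if j = i then ((u i / β : ℝ) : ℂ) else 0 := by
  have hVe : ∀ (i : Fin n) (a : Fin n) (b : Fin d),
      V (0, a, b) (0, i, 0) =
        if a = i then (Real.sqrt (u i / β) : ℂ) * ψ i b else 0 := by
    intro i a b
    have := hV i a b
    simpa [Matrix.mulVec, dotProduct, mul_ite] using this
  intro i j
  have hentry : Uu.mulVec
      (fun q => if q = ((0 : Fin 2), (0 : Fin 2), i, (0 : Fin d)) then 1 else 0)
      (0, 0, j, 0) = Uu (0, 0, j, 0) (0, 0, i, 0) := by
    simp [Matrix.mulVec, dotProduct, mul_ite]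
  rw [hentry, hUu, Matrix.mul_apply]
  simp only [Matrix.of_apply, Matrix.conjTranspose_apply]
  rw [Fintype.sum_prod_type]
  simp only [Fintype.sum_prod_type]
  simp only [ite_mul, mul_ite, one_mul, zero_mul, mul_one, mul_zero]
  rw [Finset.sum_comm]
  simp only [Finset.sum_ite_eq, Finset.mem_univ, if_true, Finset.sum_ite_irrel,
    Finset.sum_const_zero]
  -- now the sum over c collapses; remaining: sum over a b of
  -- conj (V (0,a,b) (0,j,0)) * V (0,a,b) (0,i,0)
  have : ∀ (a : Fin n) (b : Fin d),
      (starRingEnd ℂ) (V (0, a, b) (0, j, 0)) * V (0, a, b) (0, i, 0) =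
        if a = j then (if a = i then
          ((Real.sqrt (u j / β) : ℂ)) * ((Real.sqrt (u i / β) : ℂ)) *
            ((starRingEnd ℂ) (ψ j b) * ψ i b) else 0) else 0 := by
    intro a b
    rw [hVe, hVe]
    rcases eq_or_ne a j with rfl | h1
    · rcases eq_or_ne a i with rfl | h2
      · simp only [if_true, eq_self_iff_true, if_pos, _root_.map_mul, Complex.conj_ofReal]
        ring_nf
      · simp [h2]
    · simp [h1]
  simp only [Finset.sum_ite_eq, Finset.sum_ite_eq', Finset.mem_univ, if_true,
    Complex.star_def]
  simp only [this]
  rcases eq_or_ne j i with rfl | hij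
  · have h1 : ∑ b, (starRingEnd ℂ) (ψ j b) * ψ j b = 1 := by
      calc ∑ b, (starRingEnd ℂ) (ψ j b) * ψ j b
          = ∑ b, ((‖ψ j b‖ ^ 2 : ℝ) : ℂ) := by
            refine Finset.sum_congr rfl fun b _ => ?_
            rw [← Complex.normSq_eq_conj_mul_self]
            norm_cast
            rw [Complex.normSq_eq_norm_sq]
        _ = 1 := by rw [← Complex.ofReal_sum, hψ j, Complex.ofReal_one]
    have hs : ((Real.sqrt (u j / β) : ℂ)) * ((Real.sqrt (u j / β) : ℂ)) =
        ((u j / β : ℝ) : ℂ) := by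
      rw [← Complex.ofReal_mul, Real.mul_self_sqrt (div_nonneg (hu j) hβ.le)]
    simp only [← ite_and, and_self, Finset.sum_ite_irrel, Finset.sum_const_zero,
      Finset.sum_ite_eq', Finset.mem_univ, if_true]
    rw [← Finset.mul_sum, hs, h1, mul_one]
  · rw [if_neg hij]
    refine Finset.sum_eq_zero fun x _ => Finset.sum_eq_zero fun b _ => ?_
    rcases eq_or_ne x j with rfl | hx
    · simp [hij]
    · simp [hx]
end

section
/- Let n ≥ k ≥ 1 be integers, c ≥ 0 a real number, u ∈ ℝⁿ, and S ⊆ [n] with |S| = k. Suppose ũ_i (for i ∈ S) are real numbers with ũ_i ≤ u_i + c for all i ∈ S, and set ũ* = min_{i ∈ S} ũ_i, W = (n − k)·exp(ũ*) + Σ_{i ∈ S} exp(ũ_i), and E = Σ_{i=1}^n exp(u_i). Then E/W ≥ (k/n)·exp(−c). -/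
open Finset

/-- If `ũ_i ≤ u_i + c` on `S` (with `|S| = k`), `ũ* = min_{i∈S} ũ_i`,
`W = (n-k)exp(ũ*) + ∑_{i∈S} exp(ũ_i)` and `E = ∑_i exp(u_i)`, then
`E/W ≥ (k/n)·exp(-c)`. -/
theorem stmt12 (n k : ℕ) (hk : 1 ≤ k) (hkn : k ≤ n)
    (c : ℝ) (hc : 0 ≤ c)
    (u : Fin n → ℝ) (S : Finset (Fin n)) (hS : S.card = k) (hSne : S.Nonempty)
    (ut : Fin n → ℝ) (hut : ∀ i ∈ S, ut i ≤ u i + c)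
    (ustar : ℝ) (hustar : ustar = S.inf' hSne ut)
    (W : ℝ) (hW : W = ((n : ℝ) - k) * Real.exp ustar + ∑ i ∈ S, Real.exp (ut i))
    (E : ℝ) (hE : E = ∑ i, Real.exp (u i)) :
    (k : ℝ) / n * Real.exp (-c) ≤ E / W := by
  have hk0 : (0:ℝ) < k := by exact_mod_cast hk
  have hn0 : (0:ℝ) < n := by
    have : 1 ≤ n := le_trans hk hkn
    exact_mod_cast this
  have hkn' : (k:ℝ) ≤ n := by exact_mod_cast hkn
  set A : ℝ := ∑ i ∈ S, Real.exp (u i) with hA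
  set T : ℝ := ∑ i ∈ S, Real.exp (ut i) with hT
  have hApos : 0 < A := Finset.sum_pos (fun i _ => Real.exp_pos _) hSne
  have hTpos : 0 < T := Finset.sum_pos (fun i _ => Real.exp_pos _) hSne
  have hAE : A ≤ E := by
    rw [hE, hA]
    exact Finset.sum_le_sum_of_subset_of_nonneg (Finset.subset_univ S)
      (fun i _ _ => (Real.exp_pos _).le)
  have h1 : T ≤ Real.exp c * A := by
    rw [hT, hA, Finset.mul_sum]
    refine Finset.sum_le_sum fun i hi => ?_
    rw [← Real.exp_add]
    exact Real.exp_le_exp.mpr (by linarith [hut i hi])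
  have h2 : (k:ℝ) * Real.exp ustar ≤ T := by
    have : ∀ i ∈ S, Real.exp ustar ≤ Real.exp (ut i) := fun i hi =>
      Real.exp_le_exp.mpr (hustar ▸ Finset.inf'_le ut hi)
    calc (k:ℝ) * Real.exp ustar = ∑ _i ∈ S, Real.exp ustar := by
          rw [Finset.sum_const, hS, nsmul_eq_mul]
      _ ≤ T := Finset.sum_le_sum this
  have hWpos : 0 < W := by
    rw [hW]
    have : 0 ≤ ((n:ℝ) - k) * Real.exp ustar :=
      mul_nonneg (by linarith) (Real.exp_pos _).le
    linarith
  rw [le_div_iff₀ hWpos, hW]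
  have hec : Real.exp (-c) * Real.exp c = 1 := by
    rw [← Real.exp_add]; simp
  have hepos : 0 < Real.exp (-c) := Real.exp_pos _
  -- key: k * exp(-c) * W ≤ n * E
  have key : (k:ℝ) * Real.exp (-c) * (((n:ℝ) - k) * Real.exp ustar + T) ≤ n * E := by
    have h3 : ((n:ℝ) - k) * ((k:ℝ) * Real.exp ustar) ≤ ((n:ℝ) - k) * T :=
      mul_le_mul_of_nonneg_left h2 (by linarith)
    have h4 : Real.exp (-c) * T ≤ A := by
      have := mul_le_mul_of_nonneg_left h1 hepos.le
      calc Real.exp (-c) * T ≤ Real.exp (-c) * (Real.exp c * A) := this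
        _ = A := by rw [← mul_assoc, hec, one_mul]
    nlinarith [mul_le_mul_of_nonneg_left hAE hn0.le,
      mul_le_mul_of_nonneg_left h4 hn0.le,
      mul_le_mul_of_nonneg_left h3 hepos.le]
  calc (k:ℝ) / n * Real.exp (-c) * (((n:ℝ) - k) * Real.exp ustar + T)
      = ((k:ℝ) * Real.exp (-c) * (((n:ℝ) - k) * Real.exp ustar + T)) / n := by ring
    _ ≤ (n * E) / n := by gcongr
    _ = E := by field_simp
end

section
/- Let n ≥ k ≥ 1, β ≥ 1, ε_P ∈ (0, 1/2), and let P be a real polynomial with |P(x)| ≤ 1 for x ∈ [−1, 1] and |P(x) − (1/4)·exp(2βx)| ≤ ε_P for all x ∈ [−1, 0]. Let u ∈ ℝⁿ, S ⊆ [n] with |S| = k, and real numbers ũ_i (i ∈ S) with 0 ≤ ũ_i − u_i ≤ 4β for all i ∈ S; set ũ* = min_{i ∈ S} ũ_i and assume 0 ≤ ũ* − u_i ≤ 4β for all i ∉ S. Let W = (n − k)·exp(ũ*) + Σ_{i ∈ S} exp(ũ_i) and E = Σ_{i=1}^n exp(u_i). Define N = Σ_{i ∈ S} P((u_i − ũ_i)/(4β))²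 · exp(ũ_i)/W + Σ_{i ∉ S} P((u_i − ũ*)/(4β))² · exp(ũ*)/W. Then E/(16W) − 2ε_P ≤ N ≤ E/(16W) + 3ε_P. -/
open Finset

lemma stmt13_aux (p a e : ℝ) (h1 : |p| ≤ 1) (h2 : |p - a| ≤ e)
    (ha0 : 0 < a) (ha1 : a ≤ 1/4) (he : e < 1/2) : |p^2 - a*a| ≤ e := by
  rw [abs_le] at h1 h2 ⊢
  obtain ⟨h2a, h2b⟩ := h2
  have hpa1 : p + a ≤ 1 := by linarith
  have hpa2 : -1 ≤ p + a := by linarith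
  have h3 : 0 ≤ (e - (p - a)) * (1 - (p + a)) := mul_nonneg (by linarith) (by linarith)
  have h4 : 0 ≤ (e + (p - a)) * (1 + (p + a)) := mul_nonneg (by linarith) (by linarith)
  have h5 : 0 ≤ (e - (p - a)) * (1 + (p + a)) := mul_nonneg (by linarith) (by linarith)
  have h6 : 0 ≤ (e + (p - a)) * (1 - (p + a)) := mul_nonneg (by linarith) (by linarith)
  constructor
  · nlinarith [h3, h4]
  · nlinarith [h5, h6]

set_option maxHeartbeats 1000000 in
/-- Bounds on the squared norm `N` of the unnormalized post-selected state in the quantum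
multi-Gibbs sampler: `E/(16W) - 2ε_P ≤ N ≤ E/(16W) + 3ε_P`. -/
theorem stmt13 (n k : ℕ) (hk : 1 ≤ k) (hkn : k ≤ n)
    (β : ℝ) (hβ : 1 ≤ β)
    (εP : ℝ) (hεP : εP ∈ Set.Ioo (0 : ℝ) (1 / 2))
    (P : Polynomial ℝ)
    (hP1 : ∀ x ∈ Set.Icc (-1 : ℝ) 1, |P.eval x| ≤ 1)
    (hP2 : ∀ x ∈ Set.Icc (-1 : ℝ) 0, |P.eval x - 1 / 4 * Real.exp (2 * β * x)| ≤ εP)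
    (u : Fin n → ℝ) (S : Finset (Fin n)) (hS : S.card = k) (hSne : S.Nonempty)
    (ut : Fin n → ℝ) (hut : ∀ i ∈ S, 0 ≤ ut i - u i ∧ ut i - u i ≤ 4 * β)
    (ustar : ℝ) (hustar : ustar = S.inf' hSne ut)
    (hout : ∀ i ∉ S, 0 ≤ ustar - u i ∧ ustar - u i ≤ 4 * β)
    (W : ℝ) (hW : W = ((n : ℝ) - k) * Real.exp ustar + ∑ i ∈ S, Real.exp (ut i))
    (E : ℝ) (hE : E = ∑ i, Real.exp (u i))
    (N : ℝ) (hN : N = (∑ i ∈ S, (P.eval ((u i - ut i) / (4 * β))) ^ 2 * Real.exp (ut i) / W)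
      + ∑ i ∈ Sᶜ, (P.eval ((u i - ustar) / (4 * β))) ^ 2 * Real.exp ustar / W) :
    E / (16 * W) - 2 * εP ≤ N ∧ N ≤ E / (16 * W) + 3 * εP := by
  obtain ⟨hεP0, hεP2⟩ := hεP
  have hβ0 : (0:ℝ) < β := by linarith
  have h4β : (0:ℝ) < 4 * β := by linarith
  have key : ∀ x ∈ Set.Icc (-1:ℝ) 0,
      |P.eval x ^ 2 - 1/16 * Real.exp (4*β*x)| ≤ εP := by
    intro x hx
    obtain ⟨hx1, hx2⟩ := hx
    have h1 := hP1 x ⟨hx1, hx2.trans zero_le_one⟩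
    have h2 := hP2 x ⟨hx1, hx2⟩
    have ha0 : 0 < Real.exp (2*β*x) := Real.exp_pos _
    have ha1 : Real.exp (2*β*x) ≤ 1 := by
      rw [Real.exp_le_one_iff]
      nlinarith
    have hsq : 1/16 * Real.exp (4*β*x)
        = (1/4 * Real.exp (2*β*x)) * (1/4 * Real.exp (2*β*x)) := by
      rw [show (4:ℝ)*β*x = 2*β*x + 2*β*x by ring, Real.exp_add]; ring
    rw [hsq]
    exact stmt13_aux _ _ _ h1 h2 (by positivity) (by linarith) hεP2
  have hWpos : 0 < W := by
    have h1 : 0 < ∑ i ∈ S, Real.exp (ut i) :=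
      Finset.sum_pos (fun i _ => Real.exp_pos _) hSne
    have hk' : (k:ℝ) ≤ n := by exact_mod_cast hkn
    have h2 : 0 ≤ ((n:ℝ) - k) * Real.exp ustar :=
      mul_nonneg (by linarith) (Real.exp_pos _).le
    rw [hW]; linarith
  have hcard : ((Sᶜ.card : ℕ) : ℝ) = (n:ℝ) - k := by
    have hc : Sᶜ.card = n - k := by
      rw [Finset.card_compl, hS, Fintype.card_fin]
    rw [hc, Nat.cast_sub hkn]
  have hin : ∀ i ∈ S, |P.eval ((u i - ut i)/(4*β)) ^ 2 * Real.exp (ut i) / W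
      - Real.exp (u i) / (16*W)| ≤ εP * Real.exp (ut i) / W := by
    intro i hi
    obtain ⟨h1, h2⟩ := hut i hi
    have hx : (u i - ut i)/(4*β) ∈ Set.Icc (-1:ℝ) 0 := by
      constructor
      · rw [le_div_iff₀ h4β]; linarith
      · apply div_nonpos_of_nonpos_of_nonneg <;> linarith
    have hkey := key _ hx
    rw [show 4*β*((u i - ut i)/(4*β)) = u i - ut i by field_simp] at hkey
    have heq : P.eval ((u i - ut i)/(4*β)) ^ 2 * Real.exp (ut i) / W
        - Real.exp (u i) / (16*W)
        = (P.eval ((u i - ut i)/(4*β)) ^ 2 - 1/16 * Real.exp (u i - ut i))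
          * Real.exp (ut i) / W := by
      rw [Real.exp_sub]
      field_simp
    rw [heq, abs_div, abs_mul, abs_of_pos hWpos, abs_of_pos (Real.exp_pos _)]
    gcongr
  have hinc : ∀ i ∈ Sᶜ, |P.eval ((u i - ustar)/(4*β)) ^ 2 * Real.exp ustar / W
      - Real.exp (u i) / (16*W)| ≤ εP * Real.exp ustar / W := by
    intro i hi
    obtain ⟨h1, h2⟩ := hout i (Finset.mem_compl.mp hi)
    have hx : (u i - ustar)/(4*β) ∈ Set.Icc (-1:ℝ) 0 := by
      constructor
      · rw [le_div_iff₀ h4β]; linarith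
      · apply div_nonpos_of_nonpos_of_nonneg <;> linarith
    have hkey := key _ hx
    rw [show 4*β*((u i - ustar)/(4*β)) = u i - ustar by field_simp] at hkey
    have heq : P.eval ((u i - ustar)/(4*β)) ^ 2 * Real.exp ustar / W
        - Real.exp (u i) / (16*W)
        = (P.eval ((u i - ustar)/(4*β)) ^ 2 - 1/16 * Real.exp (u i - ustar))
          * Real.exp ustar / W := by
      rw [Real.exp_sub]
      field_simp
    rw [heq, abs_div, abs_mul, abs_of_pos hWpos, abs_of_pos (Real.exp_pos _)]
    gcongr
  have habs : |N - E/(16*W)| ≤ εP := by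
    have hNsplit : N - E/(16*W) =
        (∑ i ∈ S, (P.eval ((u i - ut i)/(4*β)) ^ 2 * Real.exp (ut i) / W
          - Real.exp (u i)/(16*W)))
        + ∑ i ∈ Sᶜ, (P.eval ((u i - ustar)/(4*β)) ^ 2 * Real.exp ustar / W
          - Real.exp (u i)/(16*W)) := by
      rw [hN, hE, ← Finset.sum_add_sum_compl S (fun i => Real.exp (u i)), add_div,
        Finset.sum_div, Finset.sum_div, Finset.sum_sub_distrib, Finset.sum_sub_distrib]
      ring
    rw [hNsplit]
    calc |_ + _| ≤ _ + _ := abs_add_le _ _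
      _ ≤ (∑ i ∈ S, εP * Real.exp (ut i) / W) + ∑ i ∈ Sᶜ, εP * Real.exp ustar / W := by
          gcongr
          · exact (Finset.abs_sum_le_sum_abs _ _).trans (Finset.sum_le_sum hin)
          · exact (Finset.abs_sum_le_sum_abs _ _).trans (Finset.sum_le_sum hinc)
      _ = εP := by
          rw [Finset.sum_const, nsmul_eq_mul, hcard, ← Finset.sum_div, ← Finset.mul_sum]
          field_simp
          rw [hW]; ring
  rw [abs_le] at habs
  constructor <;> linarith [habs.1, habs.2]
end

section
/- (Total variation error of the quantum multi-Gibbs sampler's output distribution.) Let n ≥ k ≥ 1, β ≥ 1, δ > 0 with 2βδ ≤ 4β, and ε_P ∈ (0, 1/2) with 300·n·ε_P ≤ k·exp(−2βδ). Let P be a real polynomial with P(x) ≥ 0 and |P(x) − (1/4)·exp(2βx)| ≤ ε_P for all x ∈ [−1, 0], and |P(x)| ≤ 1 on [−1,1]. Let u ∈ ℝⁿ, S ⊆ [n] with |S| = k, and real numbers ũ_i (i ∈ S) with 0 ≤ ũ_i − u_i ≤ 2βδ for all i ∈ S; set ũ* = min_{i ∈ S} ũ_i and assume 0 ≤ ũ*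 − u_i ≤ 4β for all i ∉ S. Let W = (n − k)·exp(ũ*) + Σ_{i ∈ S} exp(ũ_i), E = Σ_{i=1}^n exp(u_i), and N = Σ_{i ∈ S} P((u_i − ũ_i)/(4β))²·exp(ũ_i)/W + Σ_{i ∉ S} P((u_i − ũ*)/(4β))²·exp(ũ*)/W. Define the probability distribution q ∈ Δ_n by q_i = P((u_i − ũ_i)/(4β))²·exp(ũ_i)/(W·N) for i ∈ S and q_i = P((u_i − ũ*)/(4β))²·exp(ũ*)/(W·N) for i ∉ S, and let g ∈ Δ_n be the Gibbs distribution g_i = exp(u_i)/E. Then the total variation distance satisfies d_TV(q, g) = (1/2)·Σ_{i=1}^n |q_i − g_i| ≤ √( 88·n·ε_P·exp(2βδ)/k ). -/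
open Finset

private lemma div_le_div_of_nonneg_right' {a b c : ℝ} (h : a ≤ b) (hc : 0 < c) :
    a / c ≤ b / c := by
  rw [div_le_div_iff₀ hc hc]
  nlinarith

set_option maxHeartbeats 4000000 in
/-- Total variation error of the quantum multi-Gibbs sampler's output distribution:
the measurement distribution `q` of the normalized post-selected state is
`√(88·n·ε_P·exp(2βδ)/k)`-close in total variation distance to the Gibbs
distribution `g_i = exp(u_i)/E`. -/
theorem stmt14 (n k : ℕ) (hk : 1 ≤ k) (hkn : k ≤ n)
    (β δ : ℝ) (hβ : 1 ≤ β) (hδ : 0 < δ) (hδ2 : 2 * β * δ ≤ 4 * β)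
    (εP : ℝ) (hεP : εP ∈ Set.Ioo (0 : ℝ) (1 / 2))
    (hεPk : 300 * (n : ℝ) * εP ≤ (k : ℝ) * Real.exp (-(2 * β * δ)))
    (P : Polynomial ℝ)
    (hP0 : ∀ x ∈ Set.Icc (-1 : ℝ) 0, 0 ≤ P.eval x)
    (hP1 : ∀ x ∈ Set.Icc (-1 : ℝ) 1, |P.eval x| ≤ 1)
    (hP2 : ∀ x ∈ Set.Icc (-1 : ℝ) 0, |P.eval x - 1 / 4 * Real.exp (2 * β * x)| ≤ εP)
    (u : Fin n → ℝ) (S : Finset (Fin n)) (hS : S.card = k) (hSne : S.Nonempty)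
    (ut : Fin n → ℝ) (hut : ∀ i ∈ S, 0 ≤ ut i - u i ∧ ut i - u i ≤ 2 * β * δ)
    (ustar : ℝ) (hustar : ustar = S.inf' hSne ut)
    (hout : ∀ i ∉ S, 0 ≤ ustar - u i ∧ ustar - u i ≤ 4 * β)
    (W : ℝ) (hW : W = ((n : ℝ) - k) * Real.exp ustar + ∑ i ∈ S, Real.exp (ut i))
    (E : ℝ) (hE : E = ∑ i, Real.exp (u i))
    (N : ℝ) (hN : N = (∑ i ∈ S, (P.eval ((u i - ut i) / (4 * β))) ^ 2 * Real.exp (ut i) / W)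
      + ∑ i ∈ Sᶜ, (P.eval ((u i - ustar) / (4 * β))) ^ 2 * Real.exp ustar / W)
    (q g : Fin n → ℝ)
    (hq : ∀ i, q i = if i ∈ S then
        (P.eval ((u i - ut i) / (4 * β))) ^ 2 * Real.exp (ut i) / (W * N)
      else (P.eval ((u i - ustar) / (4 * β))) ^ 2 * Real.exp ustar / (W * N))
    (hg : ∀ i, g i = Real.exp (u i) / E) :
    1 / 2 * ∑ i, |q i - g i| ≤ Real.sqrt (88 * n * εP * Real.exp (2 * β * δ) / k) := by
  obtain ⟨hεP0, hεPhalf⟩ := hεP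
  have hβ0 : (0:ℝ) < β := lt_of_lt_of_le one_pos hβ
  have h4β : (0:ℝ) < 4 * β := by positivity
  have hk0 : (0:ℝ) < (k:ℝ) := by exact_mod_cast hk
  have hn0 : (0:ℝ) < (n:ℝ) := lt_of_lt_of_le hk0 (by exact_mod_cast hkn)
  have hnpos : 0 < n := lt_of_lt_of_le hk hkn
  -- the key polynomial approximation on [-1,0]
  have haux : ∀ x ∈ Set.Icc (-1:ℝ) 0,
      |(P.eval x) ^ 2 - Real.exp (4 * β * x) / 16| ≤ 5 / 4 * εP := by
    intro x hx
    have hx1 : x ∈ Set.Icc (-1:ℝ) 1 := ⟨hx.1, le_trans hx.2 zero_le_one⟩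
    have h1 := hP1 x hx1
    have h2 := hP2 x hx
    have hexple : Real.exp (2 * β * x) ≤ 1 := by
      rw [Real.exp_le_one_iff]
      have : 2 * β * x ≤ 2 * β * 0 := by
        apply mul_le_mul_of_nonneg_left hx.2 (by positivity)
      simpa using this
    have hexp0 : (0:ℝ) < Real.exp (2 * β * x) := Real.exp_pos _
    have hsq : (1 / 4 * Real.exp (2 * β * x)) ^ 2 = Real.exp (4 * β * x) / 16 := by
      have h4 : 4 * β * x = 2 * β * x + 2 * β * x := by ring
      rw [h4, Real.exp_add, mul_pow, sq]
      ring
    have hfac : (P.eval x) ^ 2 - Real.exp (4 * β * x) / 16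
        = (P.eval x - 1 / 4 * Real.exp (2 * β * x))
          * (P.eval x + 1 / 4 * Real.exp (2 * β * x)) := by
      rw [← hsq]; ring
    rw [hfac, abs_mul]
    have h3 : |P.eval x + 1 / 4 * Real.exp (2 * β * x)| ≤ 5 / 4 := by
      calc |P.eval x + 1 / 4 * Real.exp (2 * β * x)|
          ≤ |P.eval x| + |1 / 4 * Real.exp (2 * β * x)| := abs_add_le _ _
        _ ≤ 1 + 1 / 4 := by
            gcongr
            rw [abs_of_nonneg (by positivity)]
            nlinarith
        _ = 5 / 4 := by norm_num
    calc |P.eval x - 1 / 4 * Real.exp (2 * β * x)|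
          * |P.eval x + 1 / 4 * Real.exp (2 * β * x)|
        ≤ εP * (5 / 4) := by
          apply mul_le_mul h2 h3 (abs_nonneg _) (le_of_lt hεP0)
      _ = 5 / 4 * εP := by ring
  -- abbreviations
  set a : Fin n → ℝ := fun i => if i ∈ S then
      (P.eval ((u i - ut i) / (4 * β))) ^ 2 * Real.exp (ut i)
    else (P.eval ((u i - ustar) / (4 * β))) ^ 2 * Real.exp ustar with ha
  set b : Fin n → ℝ := fun i => Real.exp (u i) / 16 with hb
  set c : Fin n → ℝ := fun i => if i ∈ S then Real.exp (ut i) else Real.exp ustar with hc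
  -- per-index error bound
  have hkey : ∀ i, |a i - b i| ≤ 5 / 4 * εP * c i := by
    intro i
    by_cases hi : i ∈ S
    · have hyp := hut i hi
      have hxmem : (u i - ut i) / (4 * β) ∈ Set.Icc (-1:ℝ) 0 := by
        constructor
        · rw [le_div_iff₀ h4β]
          nlinarith [hyp.2]
        · apply div_nonpos_of_nonpos_of_nonneg (by linarith [hyp.1]) (le_of_lt h4β)
      have h := haux _ hxmem
      have hexpeq : Real.exp (4 * β * ((u i - ut i) / (4 * β))) * Real.exp (ut i)
          = Real.exp (u i) := by
        rw [← Real.exp_add]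
        congr 1
        field_simp
        ring
      have hai : a i - b i = ((P.eval ((u i - ut i) / (4 * β))) ^ 2
          - Real.exp (4 * β * ((u i - ut i) / (4 * β))) / 16) * Real.exp (ut i) := by
        simp only [ha, hb, hi, if_pos]
        rw [sub_mul, div_mul_eq_mul_div, hexpeq]
      rw [hai, abs_mul, abs_of_nonneg (le_of_lt (Real.exp_pos _))]
      simp only [hc, hi, if_pos]
      exact mul_le_mul_of_nonneg_right h (le_of_lt (Real.exp_pos _))
    · have hyp := hout i hi
      have hxmem : (u i - ustar) / (4 * β) ∈ Set.Icc (-1:ℝ) 0 := by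
        constructor
        · rw [le_div_iff₀ h4β]
          nlinarith [hyp.2]
        · apply div_nonpos_of_nonpos_of_nonneg (by linarith [hyp.1]) (le_of_lt h4β)
      have h := haux _ hxmem
      have hexpeq : Real.exp (4 * β * ((u i - ustar) / (4 * β))) * Real.exp ustar
          = Real.exp (u i) := by
        rw [← Real.exp_add]
        congr 1
        field_simp
        ring
      have hai : a i - b i = ((P.eval ((u i - ustar) / (4 * β))) ^ 2
          - Real.exp (4 * β * ((u i - ustar) / (4 * β))) / 16) * Real.exp ustar := by
        simp only [ha, hb, hi, if_neg, not_false_iff]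
        rw [sub_mul, div_mul_eq_mul_div, hexpeq]
      rw [hai, abs_mul, abs_of_nonneg (le_of_lt (Real.exp_pos _))]
      simp only [hc, hi, if_neg, not_false_iff]
      exact mul_le_mul_of_nonneg_right h (le_of_lt (Real.exp_pos _))
  -- sum of c equals W
  have hcW : ∑ i, c i = W := by
    rw [← Finset.sum_add_sum_compl S c]
    have h1 : ∑ i ∈ S, c i = ∑ i ∈ S, Real.exp (ut i) :=
      Finset.sum_congr rfl (fun i hi => by simp [hc, hi])
    have h2 : ∑ i ∈ Sᶜ, c i = ((n:ℝ) - k) * Real.exp ustar := by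
      have hval : ∀ i ∈ Sᶜ, c i = Real.exp ustar := by
        intro i hi
        simp only [Finset.mem_compl] at hi
        simp [hc, hi]
      rw [Finset.sum_congr rfl hval, Finset.sum_const, Finset.card_compl, hS]
      simp only [Fintype.card_fin, nsmul_eq_mul]
      push_cast [hkn]
      ring
    rw [h1, h2, hW]
    ring
  -- bound W
  have hustarle : ∀ j ∈ S, Real.exp ustar ≤ Real.exp (ut j) := by
    intro j hj
    exact Real.exp_le_exp.2 (hustar ▸ Finset.inf'_le ut hj)
  have hkustar : (k:ℝ) * Real.exp ustar ≤ ∑ i ∈ S, Real.exp (ut i) := by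
    calc (k:ℝ) * Real.exp ustar = ∑ _i ∈ S, Real.exp ustar := by
          rw [Finset.sum_const, hS]; ring
      _ ≤ ∑ i ∈ S, Real.exp (ut i) := Finset.sum_le_sum hustarle
  have hSsum : ∑ i ∈ S, Real.exp (ut i) ≤ Real.exp (2 * β * δ) * E := by
    calc ∑ i ∈ S, Real.exp (ut i) ≤ ∑ i ∈ S, Real.exp (2 * β * δ) * Real.exp (u i) := by
          apply Finset.sum_le_sum
          intro i hi
          rw [← Real.exp_add]
          exact Real.exp_le_exp.2 (by linarith [(hut i hi).2])
      _ = Real.exp (2 * β * δ) * ∑ i ∈ S, Real.exp (u i) := by rw [Finset.mul_sum]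
      _ ≤ Real.exp (2 * β * δ) * E := by
          apply mul_le_mul_of_nonneg_left _ (le_of_lt (Real.exp_pos _))
          rw [hE]
          exact Finset.sum_le_sum_of_subset_of_nonneg (Finset.subset_univ S)
            (fun i _ _ => le_of_lt (Real.exp_pos _))
  have hWbound : W ≤ (n:ℝ) / k * (Real.exp (2 * β * δ) * E) := by
    have h1 : W ≤ (n:ℝ) / k * ∑ i ∈ S, Real.exp (ut i) := by
      rw [hW]
      have h2 : ((n:ℝ) - k) * Real.exp ustar ≤ ((n:ℝ) - k) / k * ∑ i ∈ S, Real.exp (ut i) := by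
        rw [div_mul_eq_mul_div, le_div_iff₀ hk0]
        have hnk : (0:ℝ) ≤ (n:ℝ) - k := by
          have : (k:ℝ) ≤ n := by exact_mod_cast hkn
          linarith
        calc ((n:ℝ) - k) * Real.exp ustar * k = ((n:ℝ) - k) * ((k:ℝ) * Real.exp ustar) := by ring
          _ ≤ ((n:ℝ) - k) * ∑ i ∈ S, Real.exp (ut i) :=
            mul_le_mul_of_nonneg_left hkustar hnk
      have : ((n:ℝ) - k) / k * ∑ i ∈ S, Real.exp (ut i) + ∑ i ∈ S, Real.exp (ut i)
          = (n:ℝ) / k * ∑ i ∈ S, Real.exp (ut i) := by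
        field_simp
        ring
      linarith
    calc W ≤ (n:ℝ) / k * ∑ i ∈ S, Real.exp (ut i) := h1
      _ ≤ (n:ℝ) / k * (Real.exp (2 * β * δ) * E) := by
          apply mul_le_mul_of_nonneg_left hSsum (by positivity)
  -- key quantity t
  set t : ℝ := (n:ℝ) * εP * Real.exp (2 * β * δ) / k with ht
  have ht0 : 0 < t := by positivity
  have ht300 : t ≤ 1 / 300 := by
    have h2 : 300 * (n:ℝ) * εP * Real.exp (2 * β * δ) ≤ (k:ℝ) := by
      have h := mul_le_mul_of_nonneg_right hεPk (le_of_lt (Real.exp_pos (2 * β * δ)))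
      calc 300 * (n:ℝ) * εP * Real.exp (2 * β * δ)
          ≤ (k:ℝ) * Real.exp (-(2 * β * δ)) * Real.exp (2 * β * δ) := h
        _ = k := by rw [mul_assoc, ← Real.exp_add]; simp
    rw [ht, div_le_div_iff₀ hk0 (by norm_num)]
    linarith
  have hE0 : 0 < E := by
    rw [hE]
    apply Finset.sum_pos (fun i _ => Real.exp_pos _)
    exact Finset.univ_nonempty_iff.2 (Fin.pos_iff_nonempty.1 hnpos)
  set B : ℝ := E / 16 with hB
  have hB0 : 0 < B := by positivity
  -- total error bound
  have hsumerr : ∑ i, |a i - b i| ≤ 20 * t * B := by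
    calc ∑ i, |a i - b i| ≤ ∑ i, 5 / 4 * εP * c i := Finset.sum_le_sum (fun i _ => hkey i)
      _ = 5 / 4 * εP * W := by rw [← Finset.mul_sum, hcW]
      _ ≤ 5 / 4 * εP * ((n:ℝ) / k * (Real.exp (2 * β * δ) * E)) := by
          apply mul_le_mul_of_nonneg_left hWbound (by positivity)
      _ = 20 * t * B := by
          rw [ht, hB]
          field_simp [hk0.ne']
          ring
  set A : ℝ := ∑ i, a i with hA
  have hbsum : ∑ i, b i = B := by
    rw [hB, hE, Finset.sum_div]
  have hAB : |A - B| ≤ 20 * t * B := by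
    calc |A - B| = |∑ i, (a i - b i)| := by rw [Finset.sum_sub_distrib, hbsum]
      _ ≤ ∑ i, |a i - b i| := Finset.abs_sum_le_sum_abs _ _
      _ ≤ 20 * t * B := hsumerr
  have hη : 20 * t ≤ 1 / 15 := by linarith
  have hA_lb : (1 - 20 * t) * B ≤ A := by
    have := abs_sub_le_iff.1 hAB
    nlinarith [this.2]
  have hA0 : 0 < A := by nlinarith
  -- W > 0 and A = W * N
  have hW0 : 0 < W := by
    rw [hW]
    have h1 : 0 < ∑ i ∈ S, Real.exp (ut i) :=
      Finset.sum_pos (fun i _ => Real.exp_pos _) hSne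
    have h2 : (0:ℝ) ≤ ((n:ℝ) - k) * Real.exp ustar := by
      apply mul_nonneg _ (le_of_lt (Real.exp_pos _))
      have : (k:ℝ) ≤ n := by exact_mod_cast hkn
      linarith
    linarith
  have hcan : ∀ p : ℝ, W * (p / W) = p := by
    intro p
    field_simp
  have hWN : W * N = A := by
    rw [hN, hA, ← Finset.sum_add_sum_compl S a]
    rw [mul_add, Finset.mul_sum, Finset.mul_sum]
    congr 1
    · apply Finset.sum_congr rfl
      intro i hi
      rw [hcan]
      simp only [ha]
      rw [if_pos hi]
    · apply Finset.sum_congr rfl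
      intro i hi
      simp only [Finset.mem_compl] at hi
      rw [hcan]
      simp only [ha]
      rw [if_neg hi]
  have hqA : ∀ i, q i = a i / A := by
    intro i
    rw [hq i, ← hWN]
    by_cases hi : i ∈ S <;> simp [ha, hi]
  have hgB : ∀ i, g i = b i / B := by
    intro i
    rw [hg i, hb, hB]
    field_simp
  have hb0 : ∀ i, 0 ≤ b i := fun i => by positivity
  -- TV bound
  have hTVterm : ∀ i, |q i - g i| ≤ |a i - b i| / A + b i * |B - A| / (A * B) := by
    intro i
    rw [hqA i, hgB i]
    have heq : a i / A - b i / B = ((a i - b i) * B + b i * (B - A)) / (A * B) := by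
      field_simp [hA0.ne', hB0.ne']
      ring
    rw [heq, abs_div, abs_of_pos (mul_pos hA0 hB0)]
    have h1 : |(a i - b i) * B + b i * (B - A)| ≤ |a i - b i| * B + b i * |B - A| := by
      calc |(a i - b i) * B + b i * (B - A)| ≤ |(a i - b i) * B| + |b i * (B - A)| := abs_add_le _ _
        _ = |a i - b i| * B + b i * |B - A| := by
            rw [abs_mul, abs_mul, abs_of_pos hB0, abs_of_nonneg (hb0 i)]
    have h2 : (|a i - b i| * B + b i * |B - A|) / (A * B)
        = |a i - b i| / A + b i * |B - A| / (A * B) := by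
      field_simp [hA0.ne', hB0.ne']
    rw [← h2]
    exact div_le_div_of_nonneg_right' h1 (mul_pos hA0 hB0)
  have hTV : ∑ i, |q i - g i| ≤ 40 * t * B / A := by
    calc ∑ i, |q i - g i| ≤ ∑ i, (|a i - b i| / A + b i * |B - A| / (A * B)) :=
          Finset.sum_le_sum (fun i _ => hTVterm i)
      _ = (∑ i, |a i - b i|) / A + (∑ i, b i) * |B - A| / (A * B) := by
          rw [Finset.sum_add_distrib, ← Finset.sum_div, ← Finset.sum_div, ← Finset.sum_mul]
      _ ≤ (20 * t * B) / A + B * (20 * t * B) / (A * B) := by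
          have hBA : |B - A| ≤ 20 * t * B := by rw [abs_sub_comm]; exact hAB
          have e1 : (∑ i, |a i - b i|) / A ≤ 20 * t * B / A :=
            div_le_div_of_nonneg_right' hsumerr hA0
          have e2 : (∑ i, b i) * |B - A| / (A * B) ≤ B * (20 * t * B) / (A * B) :=
            div_le_div_of_nonneg_right'
              (by rw [hbsum]; exact mul_le_mul_of_nonneg_left hBA hB0.le)
              (mul_pos hA0 hB0)
          exact add_le_add e1 e2
      _ = 40 * t * B / A := by
          field_simp [hA0.ne', hB0.ne']
          ring
  -- conclude
  have hfinal : 1 / 2 * ∑ i, |q i - g i| ≤ 20 * t / (1 - 20 * t) := by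
    have h1 : 40 * t * B / A ≤ 40 * t / (1 - 20 * t) := by
      rw [div_le_div_iff₀ hA0 (by linarith)]
      have h2 : 40 * t * B * (1 - 20 * t) ≤ 40 * t * A := by
        have := mul_le_mul_of_nonneg_left hA_lb (by positivity : (0:ℝ) ≤ 40 * t)
        nlinarith
      nlinarith
    have h3 : 40 * t / (1 - 20 * t) = 2 * (20 * t / (1 - 20 * t)) := by ring
    linarith [hTV, h1, h3]
  have hsq : (20 * t / (1 - 20 * t)) ^ 2 ≤ 88 * n * εP * Real.exp (2 * β * δ) / k := by
    have h88t : 88 * n * εP * Real.exp (2 * β * δ) / k = 88 * t := by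
      rw [ht]; ring
    rw [h88t]
    have hden : (14:ℝ) / 15 ≤ 1 - 20 * t := by linarith
    have hden0 : (0:ℝ) < 1 - 20 * t := by linarith
    have h1 : 20 * t / (1 - 20 * t) ≤ 20 * t / (14 / 15) := by
      rw [div_le_div_iff₀ hden0 (by norm_num : (0:ℝ) < 14 / 15)]
      nlinarith
    have h2 : 20 * t / (14 / 15) = 150 / 7 * t := by ring
    have h3 : (0:ℝ) ≤ 20 * t / (1 - 20 * t) := by positivity
    calc (20 * t / (1 - 20 * t)) ^ 2 ≤ (150 / 7 * t) ^ 2 := by nlinarith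
      _ ≤ 88 * t := by nlinarith
  calc 1 / 2 * ∑ i, |q i - g i| ≤ 20 * t / (1 - 20 * t) := hfinal
    _ ≤ Real.sqrt (88 * n * εP * Real.exp (2 * β * δ) / k) := Real.le_sqrt_of_sq_le hsq
end
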